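/- arXiv:1811.00572 — 2 statements merged into one kernel-verified Lean document; each statement's English description precedes it below -/
import Mathlib

section
/- Let U, V be as above, W ∈ ℝ^{n×q} have orthonormal columns spanning the null space of (C − I)ᵀ, P_W = WWᵀ. Then the map Z ↦ (P_U Z P_V + (I_m − P_U) Z P_V + P_U Z (I_n − P_V)) P_W is an idempotent linear map on ℝ^{m×n}, and its image is contained in { ξ ∈ ℝ^{m×n} : ξ(C − I) = 0 }. -/
open Matrix

/-- The map `Z ↦ (P_U Z P_V + (I − P_U) Z P_V + P_U Z (I − P_V)) P_W` is an
idempotent linear map on `ℝ^{m×n}` whose image consists of matrices `ξ` with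
`ξ (C − I) = 0`. -/
theorem tangent_projection_selfExpressive (m n r q : ℕ)
    (U : Matrix (Fin m) (Fin r) ℝ) (V : Matrix (Fin n) (Fin r) ℝ)
    (W : Matrix (Fin n) (Fin q) ℝ) (C : Matrix (Fin n) (Fin n) ℝ)
    (hU : Uᵀ * U = 1) (hV : Vᵀ * V = 1) (hW : Wᵀ * W = 1)
    -- the columns of `W` span the null space of `(C − I)ᵀ`
    (hWnull : ∀ x : Fin n → ℝ, (C - 1)ᵀ.mulVec x = 0 ↔ ∃ y : Fin q → ℝ, W.mulVec y = x)
    -- the column space of `V` lies in the null space of `(C − I)ᵀ`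
    (hVnull : (C - 1)ᵀ * V = 0) :
    IsLinearMap ℝ (fun Z : Matrix (Fin m) (Fin n) ℝ =>
        (U * Uᵀ * Z * (V * Vᵀ) + (1 - U * Uᵀ) * Z * (V * Vᵀ)
          + U * Uᵀ * Z * (1 - V * Vᵀ)) * (W * Wᵀ)) ∧
    (∀ Z : Matrix (Fin m) (Fin n) ℝ,
      (fun Z : Matrix (Fin m) (Fin n) ℝ =>
        (U * Uᵀ * Z * (V * Vᵀ) + (1 - U * Uᵀ) * Z * (V * Vᵀ)
          + U * Uᵀ * Z * (1 - V * Vᵀ)) * (W * Wᵀ))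
      ((U * Uᵀ * Z * (V * Vᵀ) + (1 - U * Uᵀ) * Z * (V * Vᵀ)
          + U * Uᵀ * Z * (1 - V * Vᵀ)) * (W * Wᵀ))
        = (U * Uᵀ * Z * (V * Vᵀ) + (1 - U * Uᵀ) * Z * (V * Vᵀ)
          + U * Uᵀ * Z * (1 - V * Vᵀ)) * (W * Wᵀ)) ∧
    (∀ Z : Matrix (Fin m) (Fin n) ℝ,
      ((U * Uᵀ * Z * (V * Vᵀ) + (1 - U * Uᵀ) * Z * (V * Vᵀ)
          + U * Uᵀ * Z * (1 - V * Vᵀ)) * (W * Wᵀ)) * (C - 1) = 0) := by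

  -- key facts
  have hWC : Wᵀ * (C - 1) = 0 := by
    have h : (C - 1)ᵀ * W = 0 := by
      ext i j
      have : (C - 1)ᵀ.mulVec (fun k => W k j) = 0 :=
        (hWnull _).2 ⟨Pi.single j 1, by ext k; simp [Matrix.mulVec, dotProduct, Pi.single_apply]⟩
      have := congrFun this i
      simpa [Matrix.mulVec, dotProduct, Matrix.mul_apply, Matrix.one_apply, eq_comm] using this
    have := congrArg Matrix.transpose h
    simpa [Matrix.transpose_mul] using this
  have hPWV : W * Wᵀ * V = V := by
    -- each column of V is in range of W
    have hcol : ∀ k, ∃ y : Fin q → ℝ, W.mulVec y = fun i => V i k := by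
      intro k
      apply (hWnull _).1
      ext i
      have := congrFun (congrFun hVnull i) k
      simpa [Matrix.mul_apply, Matrix.mulVec, dotProduct, Matrix.one_apply, eq_comm] using this
    choose y hy using hcol
    have hVWM : V = W * (Matrix.of fun j k => y k j) := by
      ext i k
      have := congrFun (hy k) i
      simpa [Matrix.mulVec, dotProduct, Matrix.mul_apply] using this.symm
    calc W * Wᵀ * V = W * Wᵀ * (W * Matrix.of fun j k => y k j) := by rw [← hVWM]
      _ = W * (Wᵀ * W) * Matrix.of fun j k => y k j := by
            simp [Matrix.mul_assoc]
      _ = V := by rw [hW]; simpa [Matrix.mul_assoc] using hVWM.symm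
  set A := U * Uᵀ with hA
  set B := V * Vᵀ with hB
  set P := W * Wᵀ with hP
  have hAA : A * A = A := by
    rw [hA]; calc U * Uᵀ * (U * Uᵀ) = U * (Uᵀ * U) * Uᵀ := by simp [Matrix.mul_assoc]
      _ = U * Uᵀ := by rw [hU]; simp
  have hBB : B * B = B := by
    rw [hB]; calc V * Vᵀ * (V * Vᵀ) = V * (Vᵀ * V) * Vᵀ := by simp [Matrix.mul_assoc]
      _ = V * Vᵀ := by rw [hV]; simp
  have hPP : P * P = P := by
    rw [hP]; calc W * Wᵀ * (W * Wᵀ) = W * (Wᵀ * W) * Wᵀ := by simp [Matrix.mul_assoc]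
      _ = W * Wᵀ := by rw [hW]; simp
  have hPB : P * B = B := by
    rw [hP, hB, ← Matrix.mul_assoc, hPWV]
  have hBP : B * P = B := by
    have := congrArg Matrix.transpose hPB
    simpa [Matrix.transpose_mul, hP, hB] using this
  have hPC : P * (C - 1) = 0 := by
    rw [hP, Matrix.mul_assoc, hWC, Matrix.mul_zero]
  refine ⟨⟨fun X Y => by simp [Matrix.add_mul, Matrix.mul_add]; abel, fun c X => by
      simp [Matrix.mul_smul, Matrix.smul_mul, Matrix.add_mul, smul_add]⟩, fun Z => ?_, fun Z => by
      rw [Matrix.mul_assoc, hPC, Matrix.mul_zero]⟩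
  simp only [Matrix.sub_mul, Matrix.mul_sub, Matrix.add_mul, Matrix.mul_add,
    Matrix.one_mul, Matrix.mul_one, Matrix.mul_assoc]
  simp only [← Matrix.mul_assoc, hAA, hBB, hPP, hPB, hBP]
  simp only [Matrix.mul_assoc, hPB, hBP, hPP, hBB]
  simp only [← Matrix.mul_assoc, hAA, hBB, hPP, hPB, hBP]
  abel
end

section
/- For any X ∈ ℝ^{m×n} of rank r, min { (‖L‖_F² + ‖R‖_F²)/2 : L ∈ ℝ^{m×r}, R ∈ ℝ^{n×r}, X = LRᵀ } = ‖X‖_*, the nuclear norm of X (sum of singular values). -/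
open Matrix

private lemma trace_tmul_nonneg {a b : ℕ} (M : Matrix (Fin a) (Fin b) ℝ) :
    0 ≤ (Mᵀ * M).trace := by
  rw [Matrix.trace]
  refine Finset.sum_nonneg fun i _ => ?_
  simp only [Matrix.diag, Matrix.mul_apply, Matrix.transpose_apply]
  exact Finset.sum_nonneg fun k _ => mul_self_nonneg _

private lemma trace_amgm {a b : ℕ} (A B : Matrix (Fin a) (Fin b) ℝ) :
    (A * Bᵀ).trace ≤ ((Aᵀ * A).trace + (Bᵀ * B).trace) / 2 := by
  have h0 : 0 ≤ ((A - B)ᵀ * (A - B)).trace := trace_tmul_nonneg _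
  have hexp : (A - B)ᵀ * (A - B) = Aᵀ * A - Aᵀ * B - Bᵀ * A + Bᵀ * B := by
    rw [Matrix.transpose_sub]
    rw [Matrix.sub_mul, Matrix.mul_sub, Matrix.mul_sub]
    abel
  rw [hexp, Matrix.trace_add, Matrix.trace_sub, Matrix.trace_sub] at h0
  have h1 : (Aᵀ * B).trace = (A * Bᵀ).trace := by
    rw [Matrix.trace_mul_comm, ← Matrix.trace_transpose (B * Aᵀ),
      Matrix.transpose_mul, Matrix.transpose_transpose]
  have h2 : (Bᵀ * A).trace = (A * Bᵀ).trace := Matrix.trace_mul_comm _ _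
  linarith

/-- For `X` of rank `r` with thin SVD `X = U D Vᵀ` (orthonormal columns, `D`
diagonal with nonnegative diagonal), the minimum of `(‖L‖_F² + ‖R‖_F²)/2` over
all factorizations `X = L Rᵀ` with `L ∈ ℝ^{m×r}`, `R ∈ ℝ^{n×r}` equals the
nuclear norm `‖X‖_* = tr D` (the sum of the singular values of `X`). -/
theorem factorization_min_eq_nuclearNorm (m n r : ℕ)
    (X : Matrix (Fin m) (Fin n) ℝ) (hrank : X.rank = r)
    (U : Matrix (Fin m) (Fin r) ℝ) (V : Matrix (Fin n) (Fin r) ℝ)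
    (D : Matrix (Fin r) (Fin r) ℝ)
    (hU : Uᵀ * U = 1) (hV : Vᵀ * V = 1)
    (hdiag : ∀ i j, i ≠ j → D i j = 0) (hpos : ∀ i, 0 ≤ D i i)
    (hSVD : X = U * D * Vᵀ) :
    IsLeast {t : ℝ | ∃ (L : Matrix (Fin m) (Fin r) ℝ) (R : Matrix (Fin n) (Fin r) ℝ),
        X = L * Rᵀ ∧ t = ((Lᵀ * L).trace + (Rᵀ * R).trace) / 2}
      D.trace := by
  constructor
  · -- membership: L = U√D, R = V√D
    set S : Matrix (Fin r) (Fin r) ℝ := Matrix.diagonal (fun i => Real.sqrt (D i i)) with hS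
    have hDdiag : D = Matrix.diagonal (fun i => D i i) := by
      ext i j
      by_cases h : i = j
      · subst h; simp
      · simp [Matrix.diagonal_apply_ne _ h, hdiag i j h]
    have hSS : S * S = D := by
      rw [hS, Matrix.diagonal_mul_diagonal]
      have : (fun i => Real.sqrt (D i i) * Real.sqrt (D i i)) = fun i => D i i :=
        funext fun i => Real.mul_self_sqrt (hpos i)
      rw [this, ← hDdiag]
    have hSt : Sᵀ = S := Matrix.diagonal_transpose _
    refine ⟨U * S, V * S, ?_, ?_⟩
    · rw [hSVD, Matrix.transpose_mul, hSt]
      conv_rhs => rw [Matrix.mul_assoc, ← Matrix.mul_assoc S, hSS]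
      rw [Matrix.mul_assoc]
    · have hL : ((U * S)ᵀ * (U * S)).trace = D.trace := by
        rw [Matrix.transpose_mul, hSt, Matrix.mul_assoc, ← Matrix.mul_assoc Uᵀ, hU,
          Matrix.one_mul, hSS]
      have hR : ((V * S)ᵀ * (V * S)).trace = D.trace := by
        rw [Matrix.transpose_mul, hSt, Matrix.mul_assoc, ← Matrix.mul_assoc Vᵀ, hV,
          Matrix.one_mul, hSS]
      rw [hL, hR]; ring
  · -- lower bound
    rintro t ⟨L, R, hX, ht⟩
    have hUW : ∀ {k : ℕ} (W : Matrix (Fin r) (Fin k) ℝ), Uᵀ * (U * W) = W := by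
      intro k W; rw [← Matrix.mul_assoc, hU, Matrix.one_mul]
    set A : Matrix (Fin r) (Fin r) ℝ := Uᵀ * L with hA
    set B : Matrix (Fin r) (Fin r) ℝ := Vᵀ * R with hB
    have hD : A * Bᵀ = D := by
      rw [hA, hB, Matrix.transpose_mul, Matrix.transpose_transpose, Matrix.mul_assoc Uᵀ,
        ← Matrix.mul_assoc L, ← hX, hSVD, Matrix.mul_assoc (U * D), hV, Matrix.mul_one, hUW]
    have hamgm := trace_amgm A B
    have hLA : Lᵀ * L - Aᵀ * A = (L - U * A)ᵀ * (L - U * A) := by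
      rw [hA]
      simp only [Matrix.transpose_sub, Matrix.transpose_mul, Matrix.transpose_transpose,
        Matrix.sub_mul, Matrix.mul_sub, Matrix.mul_assoc, hUW]
      abel
    have hRB : Rᵀ * R - Bᵀ * B = (R - V * B)ᵀ * (R - V * B) := by
      rw [hB]
      have hVW : ∀ {k : ℕ} (W : Matrix (Fin r) (Fin k) ℝ), Vᵀ * (V * W) = W := by
        intro k W; rw [← Matrix.mul_assoc, hV, Matrix.one_mul]
      simp only [Matrix.transpose_sub, Matrix.transpose_mul, Matrix.transpose_transpose,
        Matrix.sub_mul, Matrix.mul_sub, Matrix.mul_assoc, hVW]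
      abel
    have h1 : 0 ≤ (Lᵀ * L).trace - (Aᵀ * A).trace := by
      have := trace_tmul_nonneg (L - U * A)
      rwa [← hLA, Matrix.trace_sub] at this
    have h2 : 0 ≤ (Rᵀ * R).trace - (Bᵀ * B).trace := by
      have := trace_tmul_nonneg (R - V * B)
      rwa [← hRB, Matrix.trace_sub] at this
    rw [ht, ← hD]
    linarith
end
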